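/- For distinct primes p, q, every nontrivial irreducible F_q-linear representation of the group (Z/pZ)^m factors as ρ_{p,q} ∘ π for some surjective homomorphism π : (Z/pZ)^m → Z/pZ, where ρ_{p,q} : Z/pZ → F_q(ζ_p)^× is the representation sending i to ζ_p^i for a fixed primitive p-th root of unity ζ_p in an extension of F_q. -/

import Mathlib

private lemma pow_iff_grp {G : Type*} [Group G] {x : G} {p : ℕ} (hx : orderOf x = p)
    (a b : ℕ) : x ^ a = x ^ b ↔ (a : ZMod p) = (b : ZMod p) := by
  rw [pow_eq_pow_iff_modEq, hx, ZMod.natCast_eq_natCast_iff]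

private lemma pow_iff_unit {K : Type*} [Monoid K] {x : K} (hxu : IsUnit x) {p : ℕ}
    (hx : orderOf x = p) (a b : ℕ) : x ^ a = x ^ b ↔ (a : ZMod p) = (b : ZMod p) := by
  have h1 : orderOf hxu.unit = p := by rw [← hx, ← orderOf_units, hxu.unit_spec]
  have h2 : ∀ n : ℕ, x ^ n = ((hxu.unit ^ n : Kˣ) : K) := by simp [hxu.unit_spec]
  rw [h2 a, h2 b, Units.val_inj, pow_iff_grp h1]

set_option maxHeartbeats 1000000 in
/-- For distinct primes `p, q`, every nontrivial irreducible `𝔽_q`-linear representation of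
`(ℤ/pℤ)^m` is isomorphic to `ρ_{p,q} ∘ π` for some surjective homomorphism
`π : (ℤ/pℤ)^m → ℤ/pℤ`, where `ρ_{p,q}` is the representation of `ℤ/pℤ` on `𝔽_q(ζ_p)`
given by multiplication by a primitive `p`-th root of unity `ζ_p`. -/
theorem stmt_8 (p q : ℕ) (hp : p.Prime) (hq : q.Prime) (hpq : p ≠ q) (m : ℕ)
    (K : Type*) [Field K] [Algebra (ZMod q) K]
    (ζ : K) (hζ : orderOf ζ = p) (hgen : Algebra.adjoin (ZMod q) {ζ} = ⊤)
    (V : Type*) [AddCommGroup V] [Module (ZMod q) V]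
    (ρ : Representation (ZMod q) (Multiplicative (Fin m → ZMod p)) V)
    (hnontriv : ∃ (g : Multiplicative (Fin m → ZMod p)) (v : V), ρ g v ≠ v)
    (hirr : ∀ W : Submodule (ZMod q) V,
      (∀ (g : Multiplicative (Fin m → ZMod p)) (w : V), w ∈ W → ρ g w ∈ W) →
      W = ⊥ ∨ W = ⊤) :
    ∃ π : (Fin m → ZMod p) →+ ZMod p, Function.Surjective π ∧
      ∃ f : V ≃ₗ[ZMod q] K, ∀ (g : Multiplicative (Fin m → ZMod p)) (v : V),
        f (ρ g v) = ζ ^ (π (Multiplicative.toAdd g)).val * f v := by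
  classical
  haveI : Fact p.Prime := ⟨hp⟩
  haveI : Fact q.Prime := ⟨hq⟩
  haveI : NeZero p := ⟨hp.ne_zero⟩
  set G := Multiplicative (Fin m → ZMod p) with hGdef
  set A := MonoidAlgebra (ZMod q) G with hAdef
  letI : Module A V := Module.compHom V (ρ.asAlgebraHom).toRingHom
  have hsmul_of : ∀ (g : G) (v : V), (MonoidAlgebra.of (ZMod q) G g) • v = ρ g v := by
    intro g v
    show ρ.asAlgebraHom (MonoidAlgebra.of (ZMod q) G g) v = ρ g v
    rw [Representation.asAlgebraHom_of]
  have hsmul_alg : ∀ (r : ZMod q) (v : V), (algebraMap (ZMod q) A r) • v = r • v := by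
    intro r v
    show ρ.asAlgebraHom (algebraMap _ _ r) v = r • v
    rw [AlgHom.commutes]
    rfl
  -- nontriviality
  obtain ⟨g0, v1, hg0⟩ := hnontriv
  haveI : Nontrivial V := ⟨⟨ρ g0 v1, v1, hg0⟩⟩
  -- simplicity as an A-module
  haveI : IsSimpleModule A V := by
    refine (isSimpleModule_iff ..).mpr ⟨fun W => ?_⟩
    let W' : Submodule (ZMod q) V :=
      { carrier := W
        add_mem' := fun ha hb => W.add_mem ha hb
        zero_mem' := W.zero_mem
        smul_mem' := fun r v hv => by
          have := W.smul_mem (algebraMap (ZMod q) A r) hv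
          rwa [hsmul_alg] at this }
    have hstab : ∀ (g : G) (w : V), w ∈ W' → ρ g w ∈ W' := by
      intro g w hw
      have := W.smul_mem (MonoidAlgebra.of (ZMod q) G g) hw
      rwa [hsmul_of] at this
    rcases hirr W' hstab with h | h
    · left
      rw [Submodule.eq_bot_iff] at h ⊢
      exact fun x hx => h x hx
    · right
      rw [Submodule.eq_top_iff'] at h ⊢
      exact h
  obtain ⟨v0, hv0⟩ := exists_ne (0 : V)
  set φ := LinearMap.toSpanSingleton A V v0 with hφdef
  have hφ : Function.Surjective φ := IsSimpleModule.toSpanSingleton_surjective A hv0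
  set I : Ideal A := LinearMap.ker φ with hIdef
  haveI hImax : I.IsMaximal := IsSimpleModule.ker_toSpanSingleton_isMaximal A hv0
  letI : Field (A ⧸ I) := Ideal.Quotient.field I
  set e : (A ⧸ I) ≃ₗ[A] V := φ.quotKerEquivOfSurjective hφ with hedef
  set u : G → A ⧸ I := fun g => Ideal.Quotient.mk I (MonoidAlgebra.of (ZMod q) G g) with hudef
  have hu_mul : ∀ g h : G, u (g * h) = u g * u h := by
    intro g h
    rw [hudef]
    simp only [map_mul]
  have hsmul_mk : ∀ (a : A) (x : A ⧸ I), a • x = Ideal.Quotient.mk I a * x := by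
    intro a x
    obtain ⟨b, rfl⟩ := Ideal.Quotient.mk_surjective x
    rw [← map_mul, ← smul_eq_mul, ← Ideal.Quotient.mk_eq_mk, ← Ideal.Quotient.mk_eq_mk,
      ← Submodule.Quotient.mk_smul]
  have hkey : ∀ (g : G) (v : V), e.symm (ρ g v) = u g * e.symm v := by
    intro g v
    rw [← hsmul_of g v, e.symm.map_smul, hsmul_mk]
  -- `u g` has p-th power one
  have hGp : ∀ g : G, g ^ p = 1 := by
    intro g
    apply Multiplicative.toAdd.injective
    rw [toAdd_pow, toAdd_one]
    funext i
    show p • (Multiplicative.toAdd g i) = 0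
    rw [nsmul_eq_mul, ZMod.natCast_self, zero_mul]
  have hup : ∀ g : G, (u g) ^ p = 1 := by
    intro g
    rw [hudef]
    simp only [← map_pow]
    rw [hGp g]
    simp only [map_one]
  -- ω := u g0 is a primitive p-th root of unity
  have hω_ne : u g0 ≠ 1 := by
    intro h
    apply hg0
    have h2 := hkey g0 v1
    rw [h, one_mul] at h2
    exact e.symm.injective h2
  have hop : orderOf (u g0) = p := by
    rcases (Nat.Prime.eq_one_or_self_of_dvd hp _ (orderOf_dvd_of_pow_eq_one (hup g0))) with h | h
    · exact absurd (orderOf_eq_one_iff.mp h) hω_ne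
    · exact h
  have hωprim : IsPrimitiveRoot (u g0) p := by
    have h1 := IsPrimitiveRoot.orderOf (u g0)
    rwa [hop] at h1
  have hωu : IsUnit (u g0) := hωprim.isUnit hp.ne_zero
  -- discrete logarithm
  have hdlog : ∀ g : G, ∃ i : ℕ, i < p ∧ (u g0) ^ i = u g := by
    intro g
    obtain ⟨i, h1, h2⟩ := hωprim.eq_pow_of_pow_eq_one (hup g)
    exact ⟨i, h1, h2⟩
  set d : G → ℕ := fun g => (hdlog g).choose with hddef
  have hd_lt : ∀ g : G, d g < p := fun g => (hdlog g).choose_spec.1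
  have hd_spec : ∀ g : G, (u g0) ^ (d g) = u g := fun g => (hdlog g).choose_spec.2
  have hd_add : ∀ g h : G, ((d (g * h) : ZMod p)) = (d g : ZMod p) + (d h : ZMod p) := by
    intro g h
    have h1 : (u g0) ^ (d (g * h)) = (u g0) ^ (d g + d h) := by
      rw [pow_add, hd_spec, hd_spec, hd_spec, hu_mul]
    rw [pow_iff_unit hωu hop] at h1
    rw [h1]
    push_cast
    ring
  have hd_g0 : ((d g0 : ZMod p)) = 1 := by
    have h1 : (u g0) ^ (d g0) = (u g0) ^ 1 := by rw [hd_spec, pow_one]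
    rw [pow_iff_unit hωu hop] at h1
    simpa using h1
  -- adjoin (u g0) = ⊤
  have hadjA : Algebra.adjoin (ZMod q) (Set.range (MonoidAlgebra.of (ZMod q) G)) = ⊤ := by
    rw [eq_top_iff]
    rintro x -
    induction x using MonoidAlgebra.induction_on with
    | of g => exact Algebra.subset_adjoin ⟨g, rfl⟩
    | add f g hf hg => exact Subalgebra.add_mem _ hf hg
    | smul r f hf => exact Subalgebra.smul_mem _ hf r
  have hadjL : Algebra.adjoin (ZMod q) {u g0} = ⊤ := by
    have h1 : Algebra.adjoin (ZMod q)
        ((Ideal.Quotient.mkₐ (ZMod q) I) '' (Set.range (MonoidAlgebra.of (ZMod q) G))) = ⊤ := by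
      rw [← AlgHom.map_adjoin, hadjA, Algebra.map_top, AlgHom.range_eq_top]
      exact Ideal.Quotient.mkₐ_surjective (ZMod q) I
    rw [eq_top_iff, ← h1]
    apply Algebra.adjoin_le
    rintro x ⟨_, ⟨g, rfl⟩, rfl⟩
    have h2 : (Ideal.Quotient.mkₐ (ZMod q) I) (MonoidAlgebra.of (ZMod q) G g) = (u g0) ^ d g :=
      (hd_spec g).symm
    rw [h2]
    exact pow_mem (Algebra.self_mem_adjoin_singleton _ _) _
  -- integrality and the minimal polynomial
  have hωint : IsIntegral (ZMod q) (u g0) := by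
    refine ⟨Polynomial.X ^ p - 1, ?_, ?_⟩
    · simpa using Polynomial.monic_X_pow_sub_C (1 : ZMod q) hp.ne_zero
    · simp [hup g0]
  have hζprim : IsPrimitiveRoot ζ p := hζ ▸ IsPrimitiveRoot.orderOf ζ
  have hζu : IsUnit ζ := hζprim.isUnit hp.ne_zero
  -- a root of the minimal polynomial of ω in K
  have hdvd : minpoly (ZMod q) (u g0) ∣ Polynomial.X ^ p - 1 := by
    apply minpoly.dvd
    simp [hup g0]
  have hsplits : Polynomial.Splits ((Polynomial.X : Polynomial K) ^ p - 1) := by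
    rw [Polynomial.X_pow_sub_one_eq_prod hp.pos hζprim]
    exact Polynomial.Splits.prod fun ζ' _ => Polynomial.Splits.X_sub_C _
  have hdvdK : (minpoly (ZMod q) (u g0)).map (algebraMap (ZMod q) K) ∣
      ((Polynomial.X : Polynomial K) ^ p - 1) := by
    have := Polynomial.map_dvd (algebraMap (ZMod q) K) hdvd
    simpa using this
  have hXne : ((Polynomial.X : Polynomial K) ^ p - 1) ≠ 0 := by
    have := Polynomial.X_pow_sub_C_ne_zero hp.pos (1 : K)
    simpa using this
  have hsp2 : Polynomial.Splits ((minpoly (ZMod q) (u g0)).map (algebraMap (ZMod q) K)) := by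
    exact hsplits.of_dvd hXne hdvdK
  obtain ⟨y, hy⟩ := Polynomial.Splits.exists_eval_eq_zero hsp2
    (by rw [Polynomial.degree_map]; exact Polynomial.degree_ne_of_natDegree_ne (minpoly.natDegree_pos hωint).ne')
  have hy' : (Polynomial.aeval y) (minpoly (ZMod q) (u g0)) = 0 := by
    rwa [Polynomial.aeval_def, Polynomial.eval₂_eq_eval_map]
  -- the power basis and the algebra hom L →ₐ K
  set pb : PowerBasis (ZMod q) (A ⧸ I) :=
    (Algebra.adjoin.powerBasis hωint).map
      ((Subalgebra.equivOfEq _ _ hadjL).trans Subalgebra.topEquiv) with hpbdef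
  have hpbgen : pb.gen = u g0 := rfl
  have hy'' : (Polynomial.aeval y) (minpoly (ZMod q) pb.gen) = 0 := by rw [hpbgen]; exact hy'
  set ψ₀ : (A ⧸ I) →ₐ[ZMod q] K := pb.lift y hy'' with hψdef
  have hψω : ψ₀ (u g0) = y := by rw [← hpbgen]; exact pb.lift_gen y hy''
  have hinj : Function.Injective ψ₀ := RingHom.injective (ψ₀ : (A ⧸ I) →+* K)
  have hyord : orderOf y = p := by
    have h1 := orderOf_injective (ψ₀ : (A ⧸ I) →* K) hinj (u g0)
    rw [← hψω]
    calc orderOf (ψ₀ (u g0)) = orderOf ((ψ₀ : (A ⧸ I) →* K) (u g0)) := rfl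
      _ = orderOf (u g0) := h1
      _ = p := hop
  have hyp : y ^ p = 1 := by rw [← hyord, pow_orderOf_eq_one]
  obtain ⟨c, hcp, hc⟩ := hζprim.eq_pow_of_pow_eq_one hyp
  have hy_ne : y ≠ 1 := by
    intro h
    rw [h, orderOf_one] at hyord
    exact hp.one_lt.ne hyord
  have hc0 : c ≠ 0 := by
    intro h
    rw [h, pow_zero] at hc
    exact hy_ne hc.symm
  have hcz : ((c : ZMod p)) ≠ 0 := by
    intro h
    rw [ZMod.natCast_eq_zero_iff] at h
    exact hc0 (Nat.eq_zero_of_dvd_of_lt h hcp)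
  -- surjectivity of ψ₀
  have hval_cast : ∀ a : ZMod p, ((a.val : ZMod p)) = a := by
    intro a
    rw [ZMod.natCast_val, ZMod.cast_id]
  have hζ_mem : ζ ∈ ψ₀.range := by
    have hval : ψ₀ ((u g0) ^ (((c : ZMod p)⁻¹).val)) = ζ := by
      rw [map_pow, hψω, ← hc, ← pow_mul]
      have h5 : ζ ^ (c * ((c : ZMod p)⁻¹).val) = ζ ^ 1 := by
        rw [pow_iff_unit hζu hζ]
        push_cast
        rw [hval_cast, mul_inv_cancel₀ hcz]
      rw [h5, pow_one]
    exact ⟨_, hval⟩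
  have hsurj : Function.Surjective ψ₀ := by
    rw [← AlgHom.range_eq_top, eq_top_iff, ← hgen]
    exact Algebra.adjoin_le (Set.singleton_subset_iff.mpr hζ_mem)
  set ψ : (A ⧸ I) ≃ₐ[ZMod q] K := AlgEquiv.ofBijective ψ₀ ⟨hinj, hsurj⟩ with hψedef
  have hψcoe : ∀ z, ψ z = ψ₀ z := fun z => rfl
  -- the homomorphism π
  set π : (Fin m → ZMod p) →+ ZMod p :=
    AddMonoidHom.mk' (fun x => (c : ZMod p) * (d (Multiplicative.ofAdd x) : ZMod p))
      (by
        intro a b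
        show (c : ZMod p) * (d (Multiplicative.ofAdd (a + b)) : ZMod p) =
          (c : ZMod p) * (d (Multiplicative.ofAdd a) : ZMod p) +
          (c : ZMod p) * (d (Multiplicative.ofAdd b) : ZMod p)
        rw [show Multiplicative.ofAdd (a + b) =
            Multiplicative.ofAdd a * Multiplicative.ofAdd b from rfl, hd_add]
        ring) with hπdef
  have hπ_apply : ∀ g : G, π (Multiplicative.toAdd g) = (c : ZMod p) * (d g : ZMod p) := by
    intro g
    rfl
  have hπg0 : π (Multiplicative.toAdd g0) = (c : ZMod p) := by
    rw [hπ_apply, hd_g0, mul_one]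
  have hπsurj : Function.Surjective π := by
    intro a
    refine ⟨(a * (c : ZMod p)⁻¹).val • (Multiplicative.toAdd g0), ?_⟩
    rw [map_nsmul, hπg0, nsmul_eq_mul, hval_cast, mul_assoc, inv_mul_cancel₀ hcz, mul_one]
  refine ⟨π, hπsurj, ?_⟩
  -- the linear equivalence
  have hmap_smul : ∀ (r : ZMod q) (v : V), ψ₀ (e.symm (r • v)) = r • ψ₀ (e.symm v) := by
    intro r v
    rw [← hsmul_alg r v, e.symm.map_smul, hsmul_mk]
    have h2 : (Ideal.Quotient.mk I) (algebraMap (ZMod q) A r) = algebraMap (ZMod q) (A ⧸ I) r :=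
      rfl
    rw [map_mul, h2, AlgHom.commutes, ← Algebra.smul_def]
  set F : V ≃ₗ[ZMod q] K :=
    { toFun := fun v => ψ₀ (e.symm v)
      map_add' := fun a b => by
        show ψ₀ (e.symm (a + b)) = ψ₀ (e.symm a) + ψ₀ (e.symm b)
        rw [map_add, map_add]
      map_smul' := hmap_smul
      invFun := fun x => e (ψ.symm x)
      left_inv := fun v => by
        show e (ψ.symm (ψ₀ (e.symm v))) = v
        rw [← hψcoe, AlgEquiv.symm_apply_apply, LinearEquiv.apply_symm_apply]
      right_inv := fun x => by
        show ψ₀ (e.symm (e (ψ.symm x))) = x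
        rw [LinearEquiv.symm_apply_apply, ← hψcoe, AlgEquiv.apply_symm_apply] } with hFdef
  refine ⟨F, ?_⟩
  intro g v
  show ψ₀ (e.symm (ρ g v)) = ζ ^ (π (Multiplicative.toAdd g)).val * ψ₀ (e.symm v)
  rw [hkey g v, map_mul]
  congr 1
  have hmp2 : ψ₀ ((u g0) ^ d g) = (ψ₀ (u g0)) ^ d g := map_pow _ _ _
  rw [← hd_spec g, hmp2, hψω, ← hc, ← pow_mul, pow_iff_unit hζu hζ,
    hval_cast (π (Multiplicative.toAdd g)), hπ_apply]
  push_cast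
  ring
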